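/- Let V be a regular vine on a finite set A whose maximal element A covers the two elements A∖{a_1} and A∖{a_2} in V, for distinct a_1, a_2 ∈ A. Let V_i := {S ∈ V : S ⊆ A∖{a_i}} for i ∈ {1,2} and V' := V_1 ∩ V_2 (these are regular vines on A∖{a_i} and A∖{a_1,a_2}, respectively). If V is a D-vine, then V_1, V_2, and V' are D-vines; if V is a C-vine, then V_1, V_2, and V' are C-vines. -/

import Mathlib

variable {α : Type*} [DecidableEq α]

set_option linter.unusedSectionVars false

/-- `T` is covered by `S` in the family `V`, ordered by inclusion. -/
def CoversIn (V : Set (Finset α)) (T S : Finset α) : Prop :=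
  T ∈ V ∧ S ∈ V ∧ T ⊂ S ∧ ∀ U ∈ V, T ⊂ U → U ⊂ S → False

/-- `S` is a minimal element of the family `V`, ordered by inclusion. -/
def MinimalIn (V : Set (Finset α)) (S : Finset α) : Prop :=
  S ∈ V ∧ ∀ T ∈ V, T ⊆ S → T = S

/-- `C` is a maximal chain of the family `V`, ordered by inclusion. -/
def IsMaxChainIn (V C : Set (Finset α)) : Prop :=
  C ⊆ V ∧ IsChain (· ⊆ ·) C ∧ ∀ S ∈ V, IsChain (· ⊆ ·) (insert S C) → S ∈ C

/-- The `i`-th associated graph of a family `V`: vertices are the elements of `V`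
of cardinality `i`, and each element of `V` of cardinality `i+1` is an edge
joining the two elements it covers. -/
def vineGraph (V : Set (Finset α)) (i : ℕ) :
    SimpleGraph {S : Finset α // S ∈ V ∧ S.card = i} where
  Adj S T := S ≠ T ∧ ∃ W ∈ V, W.card = i + 1 ∧ CoversIn V S.1 W ∧ CoversIn V T.1 W
  symm := by
    constructor
    rintro S T ⟨h, W, hW, hc, h1, h2⟩
    exact ⟨h.symm, W, hW, hc, h2, h1⟩
  loopless := by
    constructor
    rintro S ⟨h, -⟩
    exact h rfl

/-- A regular vine on a finite set `A` (poset definition): a family of nonempty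
subsets of `A` such that (1) all maximal chains have length `|A| - 1` and all
minimal elements are singletons, (2) there are exactly `|A|` minimal elements,
(3) every non-minimal element covers exactly two elements, (4) each associated
graph is a tree, and (5) proximity holds. -/
def IsRegularVine (A : Finset α) (V : Set (Finset α)) : Prop :=
  (∀ S ∈ V, S ⊆ A ∧ S.Nonempty) ∧
  (∀ C : Set (Finset α), IsMaxChainIn V C → C.ncard = A.card) ∧
  (∀ S, MinimalIn V S → S.card = 1) ∧
  {S | MinimalIn V S}.ncard = A.card ∧
  (∀ S ∈ V, (∃ T ∈ V, T ⊂ S) → {T | CoversIn V T S}.ncard = 2) ∧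
  (∀ i : ℕ, 1 ≤ i → i ≤ A.card - 1 → (vineGraph V i).IsTree) ∧
  (∀ S ∈ V, ∀ T ∈ V, S ≠ T → S.card = T.card → 2 ≤ S.card →
    (∃ W, CoversIn V S W ∧ CoversIn V T W) → ∃ U, CoversIn V U S ∧ CoversIn V U T)

/-- A simple graph is a path graph if its vertices can be enumerated by a
duplicate-free list covering all vertices such that adjacency holds exactly
between consecutive entries. -/
def IsPathGraph {β : Type*} (G : SimpleGraph β) : Prop :=
  ∃ l : List β, l.Nodup ∧ (∀ v : β, v ∈ l) ∧
    ∀ u v : β, G.Adj u v ↔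
      ∃ i : ℕ, (l[i]? = some u ∧ l[i + 1]? = some v) ∨
        (l[i]? = some v ∧ l[i + 1]? = some u)

/-- A simple graph is a star graph if there is a center adjacent exactly to
all other vertices, with no further edges. -/
def IsStarGraph {β : Type*} (G : SimpleGraph β) : Prop :=
  ∃ c : β, ∀ u v : β, G.Adj u v ↔ ((u = c ∧ v ≠ c) ∨ (v = c ∧ u ≠ c))

/-- A D-vine: a regular vine all of whose associated trees are path graphs. -/
def IsDVine (A : Finset α) (V : Set (Finset α)) : Prop :=
  IsRegularVine A V ∧
    ∀ i : ℕ, 1 ≤ i → i ≤ A.card - 1 → IsPathGraph (vineGraph V i)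

/-- A C-vine: a regular vine all of whose associated trees are star graphs. -/
def IsCVine (A : Finset α) (V : Set (Finset α)) : Prop :=
  IsRegularVine A V ∧
    ∀ i : ℕ, 1 ≤ i → i ≤ A.card - 1 → IsStarGraph (vineGraph V i)

section Basic
variable {A : Finset α} {V : Set (Finset α)}

lemma vine_finite (hV : IsRegularVine A V) : V.Finite := by
  apply Set.Finite.subset (A.powerset : Finset (Finset α)).finite_toSet
  intro S hS
  simpa [Finset.mem_powerset] using (hV.1 S hS).1

lemma chain_injOn_card {C : Set (Finset α)} (hc : IsChain (· ⊆ ·) C) :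
    Set.InjOn Finset.card C := by
  intro S hS T hT hcard
  by_contra hne
  rcases hc hS hT hne with h | h
  · exact hne (Finset.eq_of_subset_of_card_le h hcard.ge)
  · exact hne (Finset.eq_of_subset_of_card_le h hcard.le).symm

lemma exists_maxChainIn (hfin : V.Finite) {C₀ : Set (Finset α)}
    (h₀ : C₀ ⊆ V) (hc₀ : IsChain (· ⊆ ·) C₀) :
    ∃ C, IsMaxChainIn V C ∧ C₀ ⊆ C := by
  set 𝒞 : Set (Set (Finset α)) := {C | C₀ ⊆ C ∧ C ⊆ V ∧ IsChain (· ⊆ ·) C} with h𝒞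
  have hfin' : 𝒞.Finite := hfin.finite_subsets.subset (fun C hC => hC.2.1)
  obtain ⟨C, hC, hmax⟩ := Set.exists_max_image 𝒞 Set.ncard hfin' ⟨C₀, le_refl _, h₀, hc₀⟩
  refine ⟨C, ⟨hC.2.1, hC.2.2, ?_⟩, hC.1⟩
  intro S hS hchain
  have hmem : insert S C ∈ 𝒞 :=
    ⟨hC.1.trans (Set.subset_insert _ _), Set.insert_subset hS hC.2.1, hchain⟩
  have hfinC : C.Finite := hfin.subset hC.2.1
  have h1 : C.ncard ≤ (insert S C).ncard :=
    Set.ncard_le_ncard (Set.subset_insert _ _) (hfinC.insert S)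
  have h2 : C.ncard = (insert S C).ncard := le_antisymm h1 (hmax _ hmem)
  have : C = insert S C :=
    Set.eq_of_subset_of_ncard_le (Set.subset_insert _ _) h2.ge (hfinC.insert S)
  rw [this]; exact Set.mem_insert _ _

lemma maxChain_card_image (hV : IsRegularVine A V) {C : Set (Finset α)}
    (hC : IsMaxChainIn V C) : Finset.card '' C = Set.Icc 1 A.card := by
  have hfinC : C.Finite := (vine_finite hV).subset hC.1
  have hinj := chain_injOn_card hC.2.1
  have hn : C.ncard = A.card := hV.2.1 C hC
  have hsub : Finset.card '' C ⊆ Set.Icc 1 A.card := by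
    rintro n ⟨S, hS, rfl⟩
    obtain ⟨hSA, hSne⟩ := hV.1 S (hC.1 hS)
    exact ⟨Finset.card_pos.2 hSne, Finset.card_le_card hSA⟩
  have hIcc : (Set.Icc 1 A.card).ncard = A.card := by
    rw [← Finset.coe_Icc, Set.ncard_coe_finset, Nat.card_Icc]; omega
  refine Set.eq_of_subset_of_ncard_le hsub ?_ (by rw [← Finset.coe_Icc]; exact (Finset.Icc 1 A.card).finite_toSet)
  rw [hIcc, Set.ncard_image_of_injOn hinj, hn]

end Basic

section Grading
variable {A : Finset α} {V : Set (Finset α)}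

/-- Grading: a cover relation increases cardinality by exactly one. -/
lemma coversIn_card (hV : IsRegularVine A V) {T S : Finset α}
    (h : CoversIn V T S) : T.card + 1 = S.card := by
  obtain ⟨hT, hS, hTS, hmin⟩ := h
  have hchain : IsChain (· ⊆ ·) ({T, S} : Set (Finset α)) := by
    apply IsChain.insert (Set.Subsingleton.isChain (Set.subsingleton_singleton))
    intro U hU _
    rw [Set.mem_singleton_iff] at hU; subst hU
    exact Or.inl hTS.subset
  obtain ⟨C, hC, hsub⟩ := exists_maxChainIn (vine_finite hV)
    (by rintro U (rfl | rfl); exacts [hT, hS]) hchain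
  have himg := maxChain_card_image hV hC
  have hTm : T ∈ C := hsub (Set.mem_insert _ _)
  have hSm : S ∈ C := hsub (by right; rfl)
  have hlt : T.card < S.card := Finset.card_lt_card hTS
  have hmem : T.card + 1 ∈ Set.Icc 1 A.card := by
    have h1 : S.card ∈ Set.Icc 1 A.card := himg ▸ ⟨S, hSm, rfl⟩
    exact ⟨by omega, by have := h1.2; omega⟩
  rw [← himg] at hmem
  obtain ⟨U, hUC, hUcard⟩ := hmem
  have hUV : U ∈ V := hC.1 hUC
  -- T ⊂ U
  have hTU : T ⊂ U := by
    rcases hC.2.1.total hTm hUC with h | h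
    · exact lt_of_le_of_ne h (by intro he; subst he; omega)
    · exfalso; have := Finset.card_le_card h; omega
  -- U vs S
  rcases hC.2.1.total hUC hSm with h | h
  · rcases eq_or_ne U S with rfl | hne
    · omega
    · exact absurd (hmin U hUV hTU (lt_of_le_of_ne h hne)) (fun h => h)
  · have := Finset.card_le_card h; omega

/-- Every element of cardinality ≥ 2 has exactly two covers whose union is it. -/
lemma covers_pair (hV : IsRegularVine A V) {S : Finset α} (hS : S ∈ V)
    (h2 : 2 ≤ S.card) :
    ∃ T₁ T₂, T₁ ≠ T₂ ∧ CoversIn V T₁ S ∧ CoversIn V T₂ S ∧ T₁ ∪ T₂ = S ∧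
      ∀ U, CoversIn V U S → U = T₁ ∨ U = T₂ := by
  have hnotmin : ∃ T ∈ V, T ⊂ S := by
    by_contra hc
    push_neg at hc
    have : MinimalIn V S := ⟨hS, fun T hT hTS => by
      by_contra hne; exact absurd (lt_of_le_of_ne hTS hne) (by
        intro h; exact absurd h (by simpa using hc T hT))⟩
    have := hV.2.2.1 S this; omega
  have hn2 := hV.2.2.2.2.1 S hS hnotmin
  obtain ⟨T₁, T₂, hne, hset⟩ := Set.ncard_eq_two.1 hn2
  have hc1 : CoversIn V T₁ S := by
    have : T₁ ∈ {T | CoversIn V T S} := hset ▸ Set.mem_insert _ _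
    exact this
  have hc2 : CoversIn V T₂ S := by
    have : T₂ ∈ {T | CoversIn V T S} := hset ▸ (by right; rfl)
    exact this
  have hcard1 := coversIn_card hV hc1
  have hcard2 := coversIn_card hV hc2
  refine ⟨T₁, T₂, hne, hc1, hc2, ?_, ?_⟩
  · have hsub : T₁ ∪ T₂ ⊆ S := Finset.union_subset hc1.2.2.1.subset hc2.2.2.1.subset
    have hT1 : T₁ ⊆ T₁ ∪ T₂ := Finset.subset_union_left
    have hneq : T₁ ≠ T₁ ∪ T₂ := by
      intro h
      have hsub2 : T₂ ⊆ T₁ := h ▸ Finset.subset_union_right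
      exact hne (Finset.eq_of_subset_of_card_le hsub2 (by omega)).symm
    have := Finset.card_lt_card (lt_of_le_of_ne hT1 hneq)
    exact Finset.eq_of_subset_of_card_le hsub (by omega)
  · intro U hU
    have : U ∈ ({T₁, T₂} : Set (Finset α)) := hset ▸ hU
    simpa using this

/-- Descend to any smaller cardinality. -/
lemma exists_subset_card (hV : IsRegularVine A V) {S : Finset α} (hS : S ∈ V)
    {i : ℕ} (h1 : 1 ≤ i) (h2 : i ≤ S.card) : ∃ Z ∈ V, Z ⊆ S ∧ Z.card = i := by
  obtain ⟨k, hk⟩ : ∃ k, S.card = i + k := ⟨S.card - i, by omega⟩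
  induction k generalizing S with
  | zero => exact ⟨S, hS, subset_rfl, by omega⟩
  | succ k ih =>
    have h2' : 2 ≤ S.card := by omega
    obtain ⟨T₁, T₂, -, hc1, -, -, -⟩ := covers_pair hV hS h2'
    have hcard := coversIn_card hV hc1
    obtain ⟨Z, hZ, hZS, hZc⟩ := ih hc1.1 (by omega) (by omega)
    exact ⟨Z, hZ, hZS.trans hc1.2.2.1.subset, hZc⟩

/-- Any strict subset inside `V` is below one of the covers. -/
lemma subset_cover (hV : IsRegularVine A V) {S X : Finset α} (hS : S ∈ V)
    (hX : X ∈ V) (hSX : S ⊂ X) : ∃ T, CoversIn V T X ∧ S ⊆ T := by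
  have hchain : IsChain (· ⊆ ·) ({S, X} : Set (Finset α)) := by
    apply IsChain.insert (Set.Subsingleton.isChain (Set.subsingleton_singleton))
    intro U hU _
    rw [Set.mem_singleton_iff] at hU; subst hU
    exact Or.inl hSX.subset
  obtain ⟨C, hC, hsub⟩ := exists_maxChainIn (vine_finite hV)
    (by rintro U (rfl | rfl); exacts [hS, hX]) hchain
  have himg := maxChain_card_image hV hC
  have hSm : S ∈ C := hsub (Set.mem_insert _ _)
  have hXm : X ∈ C := hsub (by right; rfl)
  have hlt : S.card < X.card := Finset.card_lt_card hSX
  have hScard : 1 ≤ S.card := by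
    have : S.card ∈ Set.Icc 1 A.card := himg ▸ ⟨S, hSm, rfl⟩
    exact this.1
  have hmem : X.card - 1 ∈ Finset.card '' C := by
    rw [himg]
    have : X.card ∈ Set.Icc 1 A.card := himg ▸ ⟨X, hXm, rfl⟩
    exact ⟨by omega, by have := this.2; omega⟩
  obtain ⟨U, hUC, hUcard⟩ := hmem
  have hUV : U ∈ V := hC.1 hUC
  have hSU : S ⊆ U := by
    rcases hC.2.1.total hSm hUC with h | h
    · exact h
    · have := Finset.card_le_card h
      have : U = S := Finset.eq_of_subset_of_card_le h (by omega)
      rw [this]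
  have hUX : U ⊂ X := by
    rcases hC.2.1.total hUC hXm with h | h
    · exact lt_of_le_of_ne h (by intro he; subst he; omega)
    · exfalso; have := Finset.card_le_card h; omega
  refine ⟨U, ⟨hUV, hX, hUX, ?_⟩, hSU⟩
  intro W hW hUW hWX
  have := Finset.card_lt_card hUW
  have := Finset.card_lt_card hWX
  omega

/-- The intersection of the two covers of an element is in `V` and covered by both. -/
lemma sibling_inter (hV : IsRegularVine A V) {X X₁ X₂ : Finset α}
    (hc1 : CoversIn V X₁ X) (hc2 : CoversIn V X₂ X) (hne : X₁ ≠ X₂)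
    (h2 : 2 ≤ X₁.card) :
    CoversIn V (X₁ ∩ X₂) X₁ ∧ CoversIn V (X₁ ∩ X₂) X₂ := by
  have hcard1 := coversIn_card hV hc1
  have hcard2 := coversIn_card hV hc2
  have hXV : X ∈ V := hc1.2.1
  obtain ⟨T₁, T₂, hTne, hT1, hT2, hunion, huniq⟩ := covers_pair hV hXV (by omega)
  have hXun : X₁ ∪ X₂ = X := by
    rcases huniq _ hc1 with rfl | rfl <;> rcases huniq _ hc2 with rfl | rfl
    · exact absurd rfl hne
    · exact hunion
    · rw [Finset.union_comm]; exact hunion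
    · exact absurd rfl hne
  obtain ⟨U, hU1, hU2⟩ := hV.2.2.2.2.2.2 X₁ hc1.1 X₂ hc2.1 hne (by omega) h2 ⟨X, hc1, hc2⟩
  have hUcard := coversIn_card hV hU1
  have hUsub : U ⊆ X₁ ∩ X₂ := Finset.subset_inter hU1.2.2.1.subset hU2.2.2.1.subset
  have hinter : (X₁ ∩ X₂).card = X₁.card - 1 := by
    have := Finset.card_union_add_card_inter X₁ X₂
    rw [hXun] at this; omega
  have : U = X₁ ∩ X₂ := Finset.eq_of_subset_of_card_le hUsub (by omega)
  subst this
  exact ⟨hU1, hU2⟩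

section Sub
variable {A : Finset α} {V : Set (Finset α)} {X Y : Finset α}

abbrev VineVtx (V : Set (Finset α)) (i : ℕ) := {S : Finset α // S ∈ V ∧ S.card = i}

lemma coversIn_sub_iff {T S : Finset α} (hS : S ∈ V) (hSX : S ⊆ X) :
    CoversIn {S ∈ V | S ⊆ X} T S ↔ CoversIn V T S := by
  constructor
  · rintro ⟨hT, -, hTS, hmin⟩
    exact ⟨hT.1, hS, hTS, fun U hU h1 h2 => hmin U ⟨hU, h2.subset.trans hSX⟩ h1 h2⟩
  · rintro ⟨hT, -, hTS, hmin⟩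
    exact ⟨⟨hT, hTS.subset.trans hSX⟩, ⟨hS, hSX⟩, hTS, fun U hU h1 h2 => hmin U hU.1 h1 h2⟩

lemma minimalIn_sub_iff {S : Finset α} :
    MinimalIn {S ∈ V | S ⊆ X} S ↔ MinimalIn V S ∧ S ⊆ X := by
  constructor
  · rintro ⟨⟨hS, hSX⟩, hmin⟩
    exact ⟨⟨hS, fun T hT hTS => hmin T ⟨hT, hTS.trans hSX⟩ hTS⟩, hSX⟩
  · rintro ⟨⟨hS, hmin⟩, hSX⟩
    exact ⟨⟨hS, hSX⟩, fun T hT hTS => hmin T hT.1 hTS⟩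

lemma minimals_eq (hV : IsRegularVine A V) :
    {S | MinimalIn V S} = (fun a => ({a} : Finset α)) '' ↑A := by
  have hsub : {S | MinimalIn V S} ⊆ (fun a => ({a} : Finset α)) '' ↑A := by
    intro S hS
    obtain ⟨a, ha⟩ := Finset.card_eq_one.1 (hV.2.2.1 S hS)
    refine ⟨a, ?_, ha.symm⟩
    have h := (hV.1 S hS.1).1
    rw [ha] at h
    simpa using h
  refine Set.eq_of_subset_of_ncard_le hsub ?_ ((A.finite_toSet).image _)
  rw [Set.ncard_image_of_injective _ Finset.singleton_injective, Set.ncard_coe_finset,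
    hV.2.2.2.1]

lemma singleton_mem_vine (hV : IsRegularVine A V) {a : α} (ha : a ∈ A) :
    MinimalIn V {a} := by
  have : ({a} : Finset α) ∈ {S | MinimalIn V S} := by
    rw [minimals_eq hV]; exact ⟨a, ha, rfl⟩
  exact this

/-- Union of two distinct covers equals the covered element. -/
lemma covers_union (hV : IsRegularVine A V) {W u v : Finset α}
    (hu : CoversIn V u W) (hv : CoversIn V v W) (huv : u ≠ v) : u ∪ v = W := by
  have hW2 : 2 ≤ W.card := by
    have h1 := coversIn_card hV hu
    have h2 := Finset.card_pos.2 (hV.1 u hu.1).2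
    omega
  obtain ⟨T₁, T₂, hTne, hT1, hT2, hunion, huniq⟩ := covers_pair hV hu.2.1 hW2
  rcases huniq _ hu with rfl | rfl <;> rcases huniq _ hv with rfl | rfl
  · exact absurd rfl huv
  · exact hunion
  · rw [Finset.union_comm]; exact hunion
  · exact absurd rfl huv

lemma vineGraph_sub_adj (hV : IsRegularVine A V) {i : ℕ}
    {u v : VineVtx {S ∈ V | S ⊆ X} i} :
    (vineGraph {S ∈ V | S ⊆ X} i).Adj u v ↔
      u.1 ≠ v.1 ∧ ∃ W ∈ V, W.card = i + 1 ∧ CoversIn V u.1 W ∧ CoversIn V v.1 W := by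
  constructor
  · rintro ⟨hne, W, hW, hc, h1, h2⟩
    exact ⟨fun h => hne (Subtype.ext h), W, hW.1, hc,
      (coversIn_sub_iff hW.1 hW.2).1 h1, (coversIn_sub_iff hW.1 hW.2).1 h2⟩
  · rintro ⟨hne, W, hW, hc, h1, h2⟩
    have hun : u.1 ∪ v.1 = W := covers_union hV h1 h2 hne
    have hWX : W ⊆ X := by rw [← hun]; exact Finset.union_subset u.2.1.2 v.2.1.2
    exact ⟨fun h => hne (congrArg Subtype.val h), W, ⟨hW, hWX⟩, hc,
      (coversIn_sub_iff hW hWX).2 h1, (coversIn_sub_iff hW hWX).2 h2⟩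

/-- The natural graph homomorphism from the subfamily level graph to the full one. -/
def subHom (hV : IsRegularVine A V) (X : Finset α) (i : ℕ) :
    vineGraph {S ∈ V | S ⊆ X} i →g vineGraph V i where
  toFun u := ⟨u.1, u.2.1.1, u.2.2⟩
  map_rel' := by
    intro u v h
    rw [vineGraph_sub_adj hV] at h
    refine ⟨fun he => h.1 ?_, h.2⟩
    have h2 := congrArg (Subtype.val (p := fun S => S ∈ V ∧ S.card = i)) he
    exact h2

/-- Homomorphism between two subfamily level graphs. -/
def subHom₂ (hV : IsRegularVine A V) (hYX : Y ⊆ X) (i : ℕ) :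
    vineGraph {S ∈ V | S ⊆ Y} i →g vineGraph {S ∈ V | S ⊆ X} i where
  toFun u := ⟨u.1, ⟨u.2.1.1, u.2.1.2.trans hYX⟩, u.2.2⟩
  map_rel' := by
    intro u v h
    rw [vineGraph_sub_adj hV] at h
    rw [vineGraph_sub_adj hV]
    exact h

lemma reachable_lift (hV : IsRegularVine A V) (hYX : Y ⊆ X) {i : ℕ}
    (u v : VineVtx {S ∈ V | S ⊆ X} i) (hu : u.1 ⊆ Y) (hv : v.1 ⊆ Y)
    (h : (vineGraph {S ∈ V | S ⊆ Y} i).Reachable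
        ⟨u.1, ⟨u.2.1.1, hu⟩, u.2.2⟩ ⟨v.1, ⟨v.2.1.1, hv⟩, v.2.2⟩) :
    (vineGraph {S ∈ V | S ⊆ X} i).Reachable u v := by
  have hm := h.map (subHom₂ hV hYX i)
  have h1 : (subHom₂ hV hYX i) ⟨u.1, ⟨u.2.1.1, hu⟩, u.2.2⟩ = u := Subtype.ext rfl
  have h2 : (subHom₂ hV hYX i) ⟨v.1, ⟨v.2.1.1, hv⟩, v.2.2⟩ = v := Subtype.ext rfl
  rwa [h1, h2] at hm

lemma sub_reachable_aux (hV : IsRegularVine A V) (n : ℕ) :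
    ∀ X, X ∈ V → X.card ≤ n → ∀ i, 1 ≤ i →
      ∀ u v : VineVtx {S ∈ V | S ⊆ X} i,
        (vineGraph {S ∈ V | S ⊆ X} i).Reachable u v := by
  induction n with
  | zero =>
    intro X hX hc
    have := Finset.card_pos.2 (hV.1 X hX).2
    omega
  | succ n ih =>
    intro X hX hc i hi u v
    by_cases hbig : X.card ≤ i
    · have hu : u.1 = X := Finset.eq_of_subset_of_card_le u.2.1.2 (by rw [u.2.2]; exact hbig)
      have hv : v.1 = X := Finset.eq_of_subset_of_card_le v.2.1.2 (by rw [v.2.2]; exact hbig)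
      have : u = v := Subtype.ext (hu.trans hv.symm)
      rw [this]
    · push_neg at hbig
      have hX2 : 2 ≤ X.card := by omega
      obtain ⟨X₁, X₂, hne, hc1, hc2, hunion, huniq⟩ := covers_pair hV hX hX2
      have hcard1 := coversIn_card hV hc1
      have hcard2 := coversIn_card hV hc2
      -- every vertex is below X₁ or X₂
      have hbelow : ∀ w : VineVtx {S ∈ V | S ⊆ X} i, w.1 ⊆ X₁ ∨ w.1 ⊆ X₂ := by
        intro w
        have hwX : w.1 ⊂ X := lt_of_le_of_ne w.2.1.2 (by
          intro h; rw [← h] at hbig; rw [w.2.2] at hbig; omega)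
        obtain ⟨T, hT, hwT⟩ := subset_cover hV w.2.1.1 hX hwX
        rcases huniq _ hT with rfl | rfl
        · exact Or.inl hwT
        · exact Or.inr hwT
      have hihX₁ : X₁.card ≤ n := by omega
      have hihX₂ : X₂.card ≤ n := by omega
      -- reachability towards a target vertex contained in a given cover
      have key : ∀ (Y : Finset α), CoversIn V Y X → ∀ u v : VineVtx {S ∈ V | S ⊆ X} i,
          u.1 ⊆ Y → v.1 ⊆ Y →
          (vineGraph {S ∈ V | S ⊆ X} i).Reachable u v := by
        intro Y hcY u v hu hv
        have hYX : Y ⊆ X := hcY.2.2.1.subset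
        have hYn : Y.card ≤ n := by
          have := coversIn_card hV hcY; omega
        exact reachable_lift hV hYX u v hu hv
          (ih Y hcY.1 hYn i hi _ _)
      rcases hbelow u with hu1 | hu2 <;> rcases hbelow v with hv1 | hv2
      · exact key X₁ hc1 u v hu1 hv1
      · -- u ⊆ X₁, v ⊆ X₂
        by_cases htop : i = X.card - 1
        · have hu' : u.1 = X₁ := Finset.eq_of_subset_of_card_le hu1 (by rw [u.2.2]; omega)
          have hv' : v.1 = X₂ := Finset.eq_of_subset_of_card_le hv2 (by rw [v.2.2]; omega)
          have hadj : (vineGraph {S ∈ V | S ⊆ X} i).Adj u v := by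
            rw [vineGraph_sub_adj hV]
            refine ⟨by rw [hu', hv']; exact hne, X, hX, by omega, ?_, ?_⟩
            · rw [hu']; exact hc1
            · rw [hv']; exact hc2
          exact hadj.reachable
        · have hX₁2 : 2 ≤ X₁.card := by omega
          obtain ⟨hY1, hY2⟩ := sibling_inter hV hc1 hc2 hne hX₁2
          have hYcard := coversIn_card hV hY1
          obtain ⟨Z, hZ, hZY, hZc⟩ := exists_subset_card hV hY1.1 hi (by omega)
          have hZX : Z ⊆ X := hZY.trans ((hY1.2.2.1.subset).trans hc1.2.2.1.subset)
          let w : VineVtx {S ∈ V | S ⊆ X} i := ⟨Z, ⟨hZ, hZX⟩, hZc⟩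
          have hwY1 : w.1 ⊆ X₁ := hZY.trans hY1.2.2.1.subset
          have hwY2 : w.1 ⊆ X₂ := hZY.trans hY2.2.2.1.subset
          exact (key X₁ hc1 u w hu1 hwY1).trans (key X₂ hc2 w v hwY2 hv2)
      · -- symmetric
        by_cases htop : i = X.card - 1
        · have hu' : u.1 = X₂ := Finset.eq_of_subset_of_card_le hu2 (by rw [u.2.2]; omega)
          have hv' : v.1 = X₁ := Finset.eq_of_subset_of_card_le hv1 (by rw [v.2.2]; omega)
          have hadj : (vineGraph {S ∈ V | S ⊆ X} i).Adj u v := by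
            rw [vineGraph_sub_adj hV]
            refine ⟨by rw [hu', hv']; exact hne.symm, X, hX, by omega, ?_, ?_⟩
            · rw [hu']; exact hc2
            · rw [hv']; exact hc1
          exact hadj.reachable
        · have hX₁2 : 2 ≤ X₁.card := by omega
          obtain ⟨hY1, hY2⟩ := sibling_inter hV hc1 hc2 hne hX₁2
          have hYcard := coversIn_card hV hY1
          obtain ⟨Z, hZ, hZY, hZc⟩ := exists_subset_card hV hY1.1 hi (by omega)
          have hZX : Z ⊆ X := hZY.trans ((hY1.2.2.1.subset).trans hc1.2.2.1.subset)
          let w : VineVtx {S ∈ V | S ⊆ X} i := ⟨Z, ⟨hZ, hZX⟩, hZc⟩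
          have hwY1 : w.1 ⊆ X₁ := hZY.trans hY1.2.2.1.subset
          have hwY2 : w.1 ⊆ X₂ := hZY.trans hY2.2.2.1.subset
          exact (key X₂ hc2 u w hu2 hwY2).trans (key X₁ hc1 w v hwY1 hv1)
      · exact key X₂ hc2 u v hu2 hv2

lemma sub_reachable (hV : IsRegularVine A V) (hX : X ∈ V) {i : ℕ} (hi : 1 ≤ i)
    (u v : VineVtx {S ∈ V | S ⊆ X} i) :
    (vineGraph {S ∈ V | S ⊆ X} i).Reachable u v :=
  sub_reachable_aux hV X.card X hX le_rfl i hi u v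

end Sub

section RegSub
variable {A : Finset α} {V : Set (Finset α)} {X : Finset α}

lemma maxChainIn_sub (hV : IsRegularVine A V) (hX : X ∈ V) {C : Set (Finset α)}
    (hC : IsMaxChainIn {S ∈ V | S ⊆ X} C) : C.ncard = X.card := by
  have hCV : C ⊆ V := fun S hS => (hC.1 hS).1
  have hXC : X ∈ C := by
    apply hC.2.2 X ⟨hX, subset_rfl⟩
    exact hC.2.1.insert (fun S hS _ => Or.inr (hC.1 hS).2)
  obtain ⟨D, hD, hCD⟩ := exists_maxChainIn (vine_finite hV) hCV hC.2.1
  have himg := maxChain_card_image hV hD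
  have hmemC : ∀ Y ∈ D, Y.card ≤ X.card → Y ∈ C := by
    intro Y hYD hYle
    rcases hD.2.1.total hYD (hCD hXC) with h | h
    · apply hC.2.2 Y ⟨hD.1 hYD, h⟩
      exact hC.2.1.insert (fun Z hZ _ => hD.2.1.total hYD (hCD hZ))
    · have hXY : X = Y := Finset.eq_of_subset_of_card_le h hYle
      rw [← hXY]; exact hXC
  have himg2 : Finset.card '' C = Set.Icc 1 X.card := by
    apply Set.Subset.antisymm
    · rintro n ⟨S, hS, rfl⟩
      exact ⟨Finset.card_pos.2 (hV.1 S (hCV hS)).2, Finset.card_le_card (hC.1 hS).2⟩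
    · intro j hj
      have hXA : X.card ≤ A.card := Finset.card_le_card (hV.1 X hX).1
      have : j ∈ Finset.card '' D := by
        rw [himg]; exact ⟨hj.1, hj.2.trans hXA⟩
      obtain ⟨Y, hYD, rfl⟩ := this
      exact ⟨Y, hmemC Y hYD hj.2, rfl⟩
  have := Set.ncard_image_of_injOn (chain_injOn_card hC.2.1)
  rw [himg2] at this
  rw [← this, ← Finset.coe_Icc, Set.ncard_coe_finset, Nat.card_Icc]
  omega

lemma isRegularVine_sub (hV : IsRegularVine A V) (hX : X ∈ V) :
    IsRegularVine X {S ∈ V | S ⊆ X} := by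
  have hXA : X ⊆ A := (hV.1 X hX).1
  refine ⟨?_, ?_, ?_, ?_, ?_, ?_, ?_⟩
  · exact fun S hS => ⟨hS.2, (hV.1 S hS.1).2⟩
  · exact fun C hC => maxChainIn_sub hV hX hC
  · exact fun S hS => hV.2.2.1 S (minimalIn_sub_iff.1 hS).1
  · have : {S | MinimalIn {S ∈ V | S ⊆ X} S} = (fun a => ({a} : Finset α)) '' ↑X := by
      ext S
      rw [Set.mem_setOf_eq, minimalIn_sub_iff]
      constructor
      · rintro ⟨hmin, hSX⟩
        have : S ∈ {S | MinimalIn V S} := hmin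
        rw [minimals_eq hV] at this
        obtain ⟨a, _, rfl⟩ := this
        exact ⟨a, by simpa using hSX, rfl⟩
      · rintro ⟨a, ha, rfl⟩
        exact ⟨singleton_mem_vine hV (hXA ha), by simpa using ha⟩
    rw [this, Set.ncard_image_of_injective _ Finset.singleton_injective,
      Set.ncard_coe_finset]
  · intro S hS hex
    have hset : {T | CoversIn {S ∈ V | S ⊆ X} T S} = {T | CoversIn V T S} := by
      ext T; exact coversIn_sub_iff hS.1 hS.2
    rw [hset]
    obtain ⟨T, hT, hTS⟩ := hex
    exact hV.2.2.2.2.1 S hS.1 ⟨T, hT.1, hTS⟩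
  · intro i hi hile
    rw [SimpleGraph.isTree_iff]
    constructor
    · rw [SimpleGraph.connected_iff]
      refine ⟨fun u v => sub_reachable hV hX hi u v, ?_⟩
      obtain ⟨Z, hZ, hZX, hZc⟩ := exists_subset_card hV hX hi (by omega)
      exact ⟨⟨Z, ⟨hZ, hZX⟩, hZc⟩⟩
    · intro v c hc
      have hXcard : X.card ≤ A.card := Finset.card_le_card hXA
      have hacyc := ((hV.2.2.2.2.2.1 i hi (by omega)).2 : (vineGraph V i).IsAcyclic)
      have hinj : Function.Injective (subHom hV X i) := by
        intro u w h
        have h2 := congrArg (Subtype.val (p := fun S => S ∈ V ∧ S.card = i)) h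
        exact Subtype.ext h2
      exact hacyc (c.map (subHom hV X i))
        ((SimpleGraph.Walk.map_isCycle_iff_of_injective hinj).2 hc)
  · intro S hS T hT hne hcard h2 ⟨W, hWS, hWT⟩
    have hWmem := hWS.2.1
    have hWS' := (coversIn_sub_iff hWmem.1 hWmem.2).1 hWS
    have hWT' := (coversIn_sub_iff hWmem.1 hWmem.2).1 hWT
    obtain ⟨U, hU1, hU2⟩ := hV.2.2.2.2.2.2 S hS.1 T hT.1 hne hcard h2 ⟨W, hWS', hWT'⟩
    exact ⟨U, (coversIn_sub_iff hS.1 hS.2).2 hU1, (coversIn_sub_iff hT.1 hT.2).2 hU2⟩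

end RegSub

section ListLemmas
variable {β γ : Type*}

lemma indexOf_eq_of_get? [BEq β] [LawfulBEq β] {l : List β} (hnd : l.Nodup)
    {j : ℕ} {x : β} (h : l[j]? = some x) : l.idxOf x = j := by
  have hx : x ∈ l := List.mem_of_getElem? h
  have h2 : l[l.idxOf x]? = some x := List.getElem?_idxOf hx
  obtain ⟨hlt, hget⟩ := List.getElem?_eq_some_iff.1 h
  obtain ⟨hlt2, hget2⟩ := List.getElem?_eq_some_iff.1 h2
  have hinj := List.Nodup.get_inj_iff hnd (i := ⟨l.idxOf x, hlt2⟩) (j := ⟨j, hlt⟩)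
  have heq : l.get ⟨l.idxOf x, hlt2⟩ = l.get ⟨j, hlt⟩ := by simp only [List.get_eq_getElem]; rw [hget, hget2]
  simpa using hinj.1 heq

lemma filterMap_get?_interval (f : β → Option γ) :
    ∀ (l : List β) (a len : ℕ),
      (∀ j v, l[j]? = some v → ((f v).isSome ↔ a ≤ j ∧ j < a + len)) →
      ∀ j, (l.filterMap f)[j]? = (l[a + j]?).bind f := by
  intro l
  induction l with
  | nil => intro a len _ j; simp
  | cons x t ih =>
    intro a len H j
    match a, len with
    | 0, 0 =>
      have hnone : ∀ v ∈ x :: t, f v = none := by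
        intro v hv
        obtain ⟨n, hn⟩ := List.mem_iff_getElem?.1 hv
        have := H n v hn
        simp only [Nat.add_zero] at this
        rcases hfv : f v with _ | b
        · rfl
        · exfalso
          have h2 := this.1 (by rw [hfv]; exact rfl)
          omega
      rw [List.filterMap_eq_nil_iff.2 hnone]
      rcases hg : (x :: t)[0 + j]? with _ | v
      · simp
      · have := hnone v (List.mem_of_getElem? hg)
        simp [this]
    | 0, len + 1 =>
      have hx := H 0 x rfl
      simp only [Option.isSome_iff_exists] at hx
      obtain ⟨b, hb⟩ := hx.2 (by omega)
      rw [List.filterMap_cons_some hb]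
      have Ht : ∀ j v, t[j]? = some v → ((f v).isSome ↔ 0 ≤ j ∧ j < 0 + len) := by
        intro j v hjv
        have := H (j + 1) v (by rwa [List.getElem?_cons_succ])
        constructor
        · intro hs; have := this.1 hs; omega
        · intro hj; exact this.2 (by omega)
      cases j with
      | zero => simp [hb]
      | succ j =>
        rw [List.getElem?_cons_succ]
        have := ih 0 len Ht j
        simpa using this
    | a + 1, len =>
      have hx : f x = none := by
        have := H 0 x rfl
        rcases hfv : f x with _ | b
        · rfl
        · exfalso
          have h2 := this.1 (by rw [hfv]; exact rfl)
          omega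
      rw [List.filterMap_cons_none hx]
      have Ht : ∀ j v, t[j]? = some v → ((f v).isSome ↔ a ≤ j ∧ j < a + len) := by
        intro j v hjv
        have := H (j + 1) v (by rwa [List.getElem?_cons_succ])
        constructor
        · intro hs; have := this.1 hs; omega
        · intro hj; exact this.2 (by omega)
      have := ih a len Ht j
      rw [this]
      have hidx : a + 1 + j = (a + j) + 1 := by omega
      rw [hidx, List.getElem?_cons_succ]

lemma walk_pos_ivt {G : SimpleGraph β} (pos : β → ℕ)
    (hstep : ∀ {x y : β}, G.Adj x y → pos y = pos x + 1 ∨ pos y + 1 = pos x) :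
    ∀ {u w : β} (p : G.Walk u w) (q : ℕ), pos u ≤ q → q ≤ pos w →
      ∃ x ∈ p.support, pos x = q := by
  intro u w p
  induction p with
  | @nil u₀ => intro q h1 h2; exact ⟨u₀, by simp, by omega⟩
  | @cons u' b w' h p ih =>
    intro q h1 h2
    rcases eq_or_lt_of_le h1 with heq | hlt
    · exact ⟨u', by simp, heq⟩
    · have hb : pos b ≤ q := by rcases hstep h with h' | h' <;> omega
      obtain ⟨x, hx, hxq⟩ := ih q hb h2
      exact ⟨x, by simp [hx], hxq⟩
end ListLemmas

section Transfer
variable {A : Finset α} {V : Set (Finset α)} {X : Finset α}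

lemma adj_sub_iff_big (hV : IsRegularVine A V) {i : ℕ}
    {u v : VineVtx {S ∈ V | S ⊆ X} i} :
    (vineGraph {S ∈ V | S ⊆ X} i).Adj u v ↔
      (vineGraph V i).Adj (subHom hV X i u) (subHom hV X i v) := by
  rw [vineGraph_sub_adj hV]
  constructor
  · rintro ⟨hne, h⟩
    refine ⟨fun he => hne ?_, h⟩
    have h2 := congrArg (Subtype.val (p := fun S => S ∈ V ∧ S.card = i)) he
    exact h2
  · rintro ⟨hne, h⟩
    exact ⟨fun he => hne (Subtype.ext he), h⟩

lemma isStarGraph_sub (hV : IsRegularVine A V) (hX : X ∈ V) {i : ℕ} (hi : 1 ≤ i)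
    (hiX : i ≤ X.card) (hstar : IsStarGraph (vineGraph V i)) :
    IsStarGraph (vineGraph {S ∈ V | S ⊆ X} i) := by
  obtain ⟨c, hc⟩ := hstar
  obtain ⟨Z, hZ, hZX, hZc⟩ := exists_subset_card hV hX hi hiX
  by_cases hcmem : c.1 ⊆ X
  · refine ⟨⟨c.1, ⟨c.2.1, hcmem⟩, c.2.2⟩, ?_⟩
    have key : ∀ w : VineVtx {S ∈ V | S ⊆ X} i,
        subHom hV X i w = c ↔ w = ⟨c.1, ⟨c.2.1, hcmem⟩, c.2.2⟩ := by
      intro w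
      constructor
      · intro h
        have h2 := congrArg (Subtype.val (p := fun S => S ∈ V ∧ S.card = i)) h
        exact Subtype.ext h2
      · intro h
        have h2 := congrArg
          (Subtype.val (p := fun S => S ∈ {S | S ∈ V ∧ S ⊆ X} ∧ S.card = i)) h
        exact Subtype.ext h2
    intro u v
    rw [adj_sub_iff_big hV, hc]
    simp only [ne_eq, key u, key v]
  · have hnoedge : ∀ {u v : VineVtx {S ∈ V | S ⊆ X} i},
        ¬ (vineGraph {S ∈ V | S ⊆ X} i).Adj u v := by
      intro u v h
      rw [adj_sub_iff_big hV, hc] at h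
      rcases h with ⟨h1, -⟩ | ⟨h1, -⟩
      · refine hcmem ?_
        rw [← Subtype.ext_iff.1 h1]; exact u.2.1.2
      · refine hcmem ?_
        rw [← Subtype.ext_iff.1 h1]; exact v.2.1.2
    have huniq : ∀ u v : VineVtx {S ∈ V | S ⊆ X} i, u = v := by
      intro u v
      obtain ⟨w⟩ := sub_reachable hV hX hi u v
      cases w with
      | nil => rfl
      | cons h _ => exact absurd h hnoedge
    refine ⟨⟨Z, ⟨hZ, hZX⟩, hZc⟩, fun u v => ?_⟩
    constructor
    · intro h; exact absurd h hnoedge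
    · rintro (⟨h1, h2⟩ | ⟨h1, h2⟩) <;> exact absurd (huniq _ _) h2

def liftVtx (V : Set (Finset α)) (X : Finset α) (i : ℕ) (v : VineVtx V i) :
    Option (VineVtx {S ∈ V | S ⊆ X} i) :=
  if h : v.1 ⊆ X then some ⟨v.1, ⟨v.2.1, h⟩, v.2.2⟩ else none

lemma liftVtx_eq_some_iff {i : ℕ} {w : VineVtx V i}
    {u : VineVtx {S ∈ V | S ⊆ X} i} :
    liftVtx V X i w = some u ↔ w.1 = u.1 := by
  unfold liftVtx
  split
  next h =>
    rw [Option.some_inj]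
    constructor
    · intro he; rw [← he]
    · intro he; exact Subtype.ext he
  next h =>
    constructor
    · intro he; exact absurd he (by simp)
    · intro he; exact absurd (he ▸ u.2.1.2 : w.1 ⊆ X) h

lemma liftVtx_isSome_iff {i : ℕ} {w : VineVtx V i} :
    (liftVtx V X i w).isSome ↔ w.1 ⊆ X := by
  unfold liftVtx
  split <;> simp_all

lemma isPathGraph_sub (hV : IsRegularVine A V) (hX : X ∈ V) {i : ℕ} (hi : 1 ≤ i)
    (hiX : i ≤ X.card) (hpath : IsPathGraph (vineGraph V i)) :
    IsPathGraph (vineGraph {S ∈ V | S ⊆ X} i) := by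
  classical
  obtain ⟨l, hnd, hall, hadj⟩ := hpath
  set φ := subHom hV X i with hφdef
  set f := liftVtx V X i with hfdef
  set P : Set ℕ := {j | ∃ w : VineVtx V i, l[j]? = some w ∧ w.1 ⊆ X} with hPdef
  obtain ⟨Z, hZ, hZX, hZc⟩ := exists_subset_card hV hX hi hiX
  have hne : P.Nonempty := by
    refine ⟨l.idxOf ⟨Z, hZ, hZc⟩, ⟨Z, hZ, hZc⟩, ?_, hZX⟩
    exact List.getElem?_idxOf (hall _)
  have hbdd : BddAbove P := by
    refine ⟨l.length, fun j hj => ?_⟩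
    obtain ⟨w, hw, -⟩ := hj
    obtain ⟨hlt, -⟩ := List.getElem?_eq_some_iff.1 hw
    omega
  set a := sInf P with hadef
  set b := sSup P with hbdef
  have haP : a ∈ P := Nat.sInf_mem hne
  have hbP : b ∈ P := Nat.sSup_mem hne hbdd
  have hab : a ≤ b := Nat.sInf_le hbP
  have hstep : ∀ {x y : VineVtx V i}, (vineGraph V i).Adj x y →
      l.idxOf y = l.idxOf x + 1 ∨ l.idxOf y + 1 = l.idxOf x := by
    intro x y h
    obtain ⟨j, hj | hj⟩ := (hadj x y).1 h
    · left; rw [indexOf_eq_of_get? hnd hj.1, indexOf_eq_of_get? hnd hj.2]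
    · right; rw [indexOf_eq_of_get? hnd hj.1, indexOf_eq_of_get? hnd hj.2]
  have hiv : ∀ j, a ≤ j → j ≤ b → j ∈ P := by
    intro j haj hjb
    obtain ⟨ua, hua, huaX⟩ := haP
    obtain ⟨ub, hub, hubX⟩ := hbP
    have hpa : l.idxOf ua = a := indexOf_eq_of_get? hnd hua
    have hpb : l.idxOf ub = b := indexOf_eq_of_get? hnd hub
    obtain ⟨w⟩ := sub_reachable hV hX hi
      ⟨ua.1, ⟨ua.2.1, huaX⟩, ua.2.2⟩ ⟨ub.1, ⟨ub.2.1, hubX⟩, ub.2.2⟩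
    have h1 : φ ⟨ua.1, ⟨ua.2.1, huaX⟩, ua.2.2⟩ = ua := Subtype.ext rfl
    have h2 : φ ⟨ub.1, ⟨ub.2.1, hubX⟩, ub.2.2⟩ = ub := Subtype.ext rfl
    obtain ⟨x, hxsup, hxq⟩ := walk_pos_ivt (fun v => l.idxOf v) hstep (w.map φ) j
      (by simp only [h1, hpa]; exact haj) (by simp only [h2, hpb]; exact hjb)
    have hxX : x.1 ⊆ X := by
      rw [SimpleGraph.Walk.support_map] at hxsup
      obtain ⟨y, -, rfl⟩ := List.mem_map.1 hxsup
      exact y.2.1.2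
    refine ⟨x, ?_, hxX⟩
    rw [← hxq]
    exact List.getElem?_idxOf (hall x)
  have hH : ∀ j v, l[j]? = some v → ((f v).isSome ↔ a ≤ j ∧ j < a + (b + 1 - a)) := by
    intro j v hjv
    rw [hfdef, liftVtx_isSome_iff]
    constructor
    · intro hvX
      have hjP : j ∈ P := ⟨v, hjv, hvX⟩
      have h1 := Nat.sInf_le hjP
      have h2 := le_csSup hbdd hjP
      exact ⟨h1, by omega⟩
    · intro hj
      obtain ⟨w, hw, hwX⟩ := hiv j hj.1 (by omega)
      rw [hjv, Option.some_inj] at hw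
      rw [hw]; exact hwX
  have hseg := filterMap_get?_interval f l a (b + 1 - a) hH
  refine ⟨l.filterMap f, ?_, ?_, ?_⟩
  · refine List.Nodup.filterMap ?_ hnd
    intro x y u hxu hyu
    rw [Option.mem_def, hfdef, liftVtx_eq_some_iff] at hxu hyu
    exact Subtype.ext (hxu.trans hyu.symm)
  · intro v
    rw [List.mem_filterMap]
    exact ⟨φ v, hall _, by rw [hfdef, liftVtx_eq_some_iff]; exact rfl⟩
  · intro u v
    constructor
    · intro h
      have hbig := (adj_sub_iff_big hV).1 h
      obtain ⟨j, hj | hj⟩ := (hadj _ _).1 hbig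
      · have hjP : j ∈ P := ⟨φ u, hj.1, u.2.1.2⟩
        have hj1P : j + 1 ∈ P := ⟨φ v, hj.2, v.2.1.2⟩
        have haj : a ≤ j := Nat.sInf_le hjP
        have hjb : j + 1 ≤ b := le_csSup hbdd hj1P
        refine ⟨j - a, Or.inl ⟨?_, ?_⟩⟩
        · rw [hseg (j - a)]
          have he : a + (j - a) = j := by omega
          rw [he, hj.1, Option.bind_some, hfdef]
          exact liftVtx_eq_some_iff.2 rfl
        · rw [hseg (j - a + 1)]
          have he : a + (j - a + 1) = j + 1 := by omega
          rw [he, hj.2, Option.bind_some, hfdef]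
          exact liftVtx_eq_some_iff.2 rfl
      · have hjP : j ∈ P := ⟨φ v, hj.1, v.2.1.2⟩
        have hj1P : j + 1 ∈ P := ⟨φ u, hj.2, u.2.1.2⟩
        have haj : a ≤ j := Nat.sInf_le hjP
        have hjb : j + 1 ≤ b := le_csSup hbdd hj1P
        refine ⟨j - a, Or.inr ⟨?_, ?_⟩⟩
        · rw [hseg (j - a)]
          have he : a + (j - a) = j := by omega
          rw [he, hj.1, Option.bind_some, hfdef]
          exact liftVtx_eq_some_iff.2 rfl
        · rw [hseg (j - a + 1)]
          have he : a + (j - a + 1) = j + 1 := by omega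
          rw [he, hj.2, Option.bind_some, hfdef]
          exact liftVtx_eq_some_iff.2 rfl
    · rintro ⟨j, hj | hj⟩
      · obtain ⟨h1, h2⟩ := hj
        rw [hseg j] at h1
        rw [hseg (j + 1)] at h2
        obtain ⟨w₁, hw₁, hfw₁⟩ := Option.bind_eq_some_iff.1 h1
        obtain ⟨w₂, hw₂, hfw₂⟩ := Option.bind_eq_some_iff.1 h2
        rw [hfdef, liftVtx_eq_some_iff] at hfw₁ hfw₂
        have hw₁' : w₁ = φ u := Subtype.ext hfw₁
        have hw₂' : w₂ = φ v := Subtype.ext hfw₂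
        have hidx : a + (j + 1) = a + j + 1 := by omega
        rw [hw₁'] at hw₁
        rw [hw₂', hidx] at hw₂
        exact (adj_sub_iff_big hV).2 ((hadj _ _).2 ⟨a + j, Or.inl ⟨hw₁, hw₂⟩⟩)
      · obtain ⟨h1, h2⟩ := hj
        rw [hseg j] at h1
        rw [hseg (j + 1)] at h2
        obtain ⟨w₁, hw₁, hfw₁⟩ := Option.bind_eq_some_iff.1 h1
        obtain ⟨w₂, hw₂, hfw₂⟩ := Option.bind_eq_some_iff.1 h2
        rw [hfdef, liftVtx_eq_some_iff] at hfw₁ hfw₂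
        have hw₁' : w₁ = φ v := Subtype.ext hfw₁
        have hw₂' : w₂ = φ u := Subtype.ext hfw₂
        have hidx : a + (j + 1) = a + j + 1 := by omega
        rw [hw₁'] at hw₁
        rw [hw₂', hidx] at hw₂
        exact (adj_sub_iff_big hV).2 ((hadj _ _).2 ⟨a + j, Or.inr ⟨hw₁, hw₂⟩⟩)

end Transfer

section Assemble
variable {A : Finset α} {V : Set (Finset α)} {X : Finset α}

lemma isDVine_sub (h : IsDVine A V) (hX : X ∈ V) : IsDVine X {S ∈ V | S ⊆ X} := by
  obtain ⟨hV, hp⟩ := h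
  refine ⟨isRegularVine_sub hV hX, fun i hi hile => ?_⟩
  have hXA : X.card ≤ A.card := Finset.card_le_card (hV.1 X hX).1
  have hXpos : 1 ≤ X.card := Finset.card_pos.2 (hV.1 X hX).2
  exact isPathGraph_sub hV hX hi (by omega) (hp i hi (by omega))

lemma isCVine_sub (h : IsCVine A V) (hX : X ∈ V) : IsCVine X {S ∈ V | S ⊆ X} := by
  obtain ⟨hV, hp⟩ := h
  refine ⟨isRegularVine_sub hV hX, fun i hi hile => ?_⟩
  have hXA : X.card ≤ A.card := Finset.card_le_card (hV.1 X hX).1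
  have hXpos : 1 ≤ X.card := Finset.card_pos.2 (hV.1 X hX).2
  exact isStarGraph_sub hV hX hi (by omega) (hp i hi (by omega))

lemma isRegularVine_empty : IsRegularVine (∅ : Finset α) (∅ : Set (Finset α)) := by
  refine ⟨?_, ?_, ?_, ?_, ?_, ?_, ?_⟩
  · intro S hS; exact absurd hS (Set.notMem_empty S)
  · intro C hC
    have : C = ∅ := Set.subset_empty_iff.1 hC.1
    simp [this]
  · intro S hS; exact absurd hS.1 (Set.notMem_empty S)
  · have : {S : Finset α | MinimalIn ∅ S} = ∅ := by
      ext S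
      simp only [Set.mem_setOf_eq, Set.mem_empty_iff_false, iff_false]
      intro h; exact absurd h.1 (Set.notMem_empty S)
    simp [this]
  · intro S hS; exact absurd hS (Set.notMem_empty S)
  · intro i hi hile
    simp only [Finset.card_empty] at hile
    omega
  · intro S hS; exact absurd hS (Set.notMem_empty S)

lemma isDVine_empty : IsDVine (∅ : Finset α) (∅ : Set (Finset α)) := by
  refine ⟨isRegularVine_empty, ?_⟩
  intro i hi hile
  simp only [Finset.card_empty] at hile
  omega

lemma isCVine_empty : IsCVine (∅ : Finset α) (∅ : Set (Finset α)) := by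
  refine ⟨isRegularVine_empty, ?_⟩
  intro i hi hile
  simp only [Finset.card_empty] at hile
  omega

end Assemble

/-- Splitting a D-vine (resp. C-vine) `V` at the two elements covered by its
maximal element gives D-vines (resp. C-vines) `V₁`, `V₂`, and `V' = V₁ ∩ V₂`. -/
theorem dvine_cvine_splitting (A : Finset α) (V : Set (Finset α))
    (hV : IsRegularVine A V) (a₁ a₂ : α) (hne : a₁ ≠ a₂)
    (h₁ : CoversIn V (A.erase a₁) A) (h₂ : CoversIn V (A.erase a₂) A) :
    (IsDVine A V →
      IsDVine (A.erase a₁) {S ∈ V | S ⊆ A.erase a₁} ∧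
      IsDVine (A.erase a₂) {S ∈ V | S ⊆ A.erase a₂} ∧
      IsDVine (A \ {a₁, a₂})
        ({S ∈ V | S ⊆ A.erase a₁} ∩ {S ∈ V | S ⊆ A.erase a₂})) ∧
    (IsCVine A V →
      IsCVine (A.erase a₁) {S ∈ V | S ⊆ A.erase a₁} ∧
      IsCVine (A.erase a₂) {S ∈ V | S ⊆ A.erase a₂} ∧
      IsCVine (A \ {a₁, a₂})
        ({S ∈ V | S ⊆ A.erase a₁} ∩ {S ∈ V | S ⊆ A.erase a₂})) := by
  have ha₁A : a₁ ∈ A := by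
    by_contra h
    have h' := h₁.2.2.1
    rw [Finset.erase_eq_of_notMem h] at h'
    exact absurd h' (lt_irrefl A)
  have ha₂A : a₂ ∈ A := by
    by_contra h
    have h' := h₂.2.2.1
    rw [Finset.erase_eq_of_notMem h] at h'
    exact absurd h' (lt_irrefl A)
  have hm₁ : A.erase a₁ ∈ V := h₁.1
  have hm₂ : A.erase a₂ ∈ V := h₂.1
  have hE : A.erase a₁ ∩ A.erase a₂ = A \ {a₁, a₂} := by
    ext x
    simp only [Finset.mem_inter, Finset.mem_erase, Finset.mem_sdiff, Finset.mem_insert,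
      Finset.mem_singleton]
    tauto
  have hsetinter : ∀ S : Finset α, S ⊆ A.erase a₁ ∩ A.erase a₂ ↔
      S ⊆ A.erase a₁ ∧ S ⊆ A.erase a₂ := fun S => Finset.subset_inter_iff
  have hseteq : {S ∈ {S ∈ V | S ⊆ A.erase a₁} | S ⊆ A.erase a₁ ∩ A.erase a₂} =
      ({S ∈ V | S ⊆ A.erase a₁} ∩ {S ∈ V | S ⊆ A.erase a₂}) := by
    ext S
    simp only [Set.mem_setOf_eq, Set.mem_inter_iff, hsetinter S]
    tauto
  by_cases h3 : 2 ≤ (A.erase a₁).card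
  · -- big case: the intersection is a member of V
    have hneq : A.erase a₁ ≠ A.erase a₂ := by
      intro h
      have : a₂ ∈ A.erase a₁ := Finset.mem_erase.2 ⟨hne.symm, ha₂A⟩
      rw [h] at this
      exact (Finset.mem_erase.1 this).1 rfl
    have hcards : (A.erase a₁).card = (A.erase a₂).card := by
      rw [Finset.card_erase_of_mem ha₁A, Finset.card_erase_of_mem ha₂A]
    obtain ⟨hcE₁, hcE₂⟩ := sibling_inter hV h₁ h₂ hneq h3
    have hEmem : A.erase a₁ ∩ A.erase a₂ ∈ {S ∈ V | S ⊆ A.erase a₁} :=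
      ⟨hcE₁.1, Finset.inter_subset_left⟩
    constructor
    · intro hD
      have d₁ := isDVine_sub hD hm₁
      have d₂ := isDVine_sub hD hm₂
      have d' := isDVine_sub d₁ hEmem
      rw [hseteq] at d'
      rw [← hE]
      exact ⟨d₁, d₂, d'⟩
    · intro hC
      have d₁ := isCVine_sub hC hm₁
      have d₂ := isCVine_sub hC hm₂
      have d' := isCVine_sub d₁ hEmem
      rw [hseteq] at d'
      rw [← hE]
      exact ⟨d₁, d₂, d'⟩
  · -- small case: |A| = 2, the intersection vine is empty
    have hc1 : (A.erase a₁).card = 1 := by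
      have hpos : 0 < (A.erase a₁).card :=
        Finset.card_pos.2 ⟨a₂, Finset.mem_erase.2 ⟨hne.symm, ha₂A⟩⟩
      omega
    have hEempty : A \ {a₁, a₂} = ∅ := by
      have hcA : A.card = 2 := by
        have := Finset.card_erase_of_mem ha₁A
        have hApos : 0 < A.card := Finset.card_pos.2 ⟨a₁, ha₁A⟩
        omega
      have hsub : A ⊆ {a₁, a₂} := by
        intro x hx
        by_contra hknot
        simp only [Finset.mem_insert, Finset.mem_singleton, not_or] at hknot
        have : ({a₁, a₂} : Finset α) ⊆ A := by
          intro y hy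
          simp only [Finset.mem_insert, Finset.mem_singleton] at hy
          rcases hy with rfl | rfl
          exacts [ha₁A, ha₂A]
        have hcard : ({a₁, a₂} : Finset α).card = 2 := Finset.card_pair hne
        have : insert x ({a₁, a₂} : Finset α) ⊆ A := by
          intro y hy
          rcases Finset.mem_insert.1 hy with rfl | hy
          exacts [hx, this hy]
        have h3' : (insert x ({a₁, a₂} : Finset α)).card = 3 := by
          rw [Finset.card_insert_of_notMem (by
            simp only [Finset.mem_insert, Finset.mem_singleton, not_or]
            exact hknot), hcard]
        have := Finset.card_le_card this
        omega
      rw [Finset.sdiff_eq_empty_iff_subset]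
      exact hsub
    have hVempty : ({S ∈ V | S ⊆ A.erase a₁} ∩ {S ∈ V | S ⊆ A.erase a₂}) = ∅ := by
      ext S
      simp only [Set.mem_inter_iff, Set.mem_setOf_eq, Set.mem_empty_iff_false, iff_false]
      rintro ⟨⟨hSV, hS1⟩, -, hS2⟩
      have hSE : S ⊆ A \ {a₁, a₂} := by
        rw [← hE]
        exact Finset.subset_inter hS1 hS2
      rw [hEempty] at hSE
      have : S = ∅ := Finset.subset_empty.1 hSE
      exact absurd this (Finset.nonempty_iff_ne_empty.1 (hV.1 S hSV).2)
    constructor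
    · intro hD
      refine ⟨isDVine_sub hD hm₁, isDVine_sub hD hm₂, ?_⟩
      rw [hEempty, hVempty]
      exact isDVine_empty
    · intro hC
      refine ⟨isCVine_sub hC hm₁, isCVine_sub hC hm₂, ?_⟩
      rw [hEempty, hVempty]
      exact isCVine_empty
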